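/- Let $n \ge 1$, $p \in (0, \infty)$, and let $F : \mathbb{R}^{n+1}_+ \to [0,\infty)$ be measurable. Suppose $N : \mathbb{R}^n \to [0,\infty)$ is measurable, belongs to $L^p(\mathbb{R}^n)$, and satisfies $F(z, s) \le N(z')$ whenever $|z - z'| < s$. Then there is a constant $C = C(n, p)$ such that for every $x \in \mathbb{R}^n$ and $r > 0$, $\frac{1}{r^n} \int_{|x - z| < r} \int_0^{2r} F(z, s)^{p/n}\, ds\, dz \le C\, \|N\|_{L^p(\mathbb{R}^n)}^{p/n}$. In other words, the measure $d\mu(z,s) := F(z,s)^{p/n}\, dz\, ds$ on $\mathbb{R}^{n+1}_+$ is a Carleson measure with $\|\mu\|_{\mathcal C} \le C \|N\|_{L^p}^{p/n}$. -/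

import Mathlib

open MeasureTheory ENNReal


lemma hoelder_rpow {α : Type*} [MeasurableSpace α] (μ : Measure α) (g : α → ℝ≥0∞)
    (hg : AEMeasurable g μ) (n : ℕ) (hn : 1 ≤ n) :
    ∫⁻ a, g a ^ (1/(n:ℝ)) ∂μ ≤ (∫⁻ a, g a ∂μ) ^ (1/(n:ℝ)) * (μ Set.univ) ^ (1 - 1/(n:ℝ)) := by
  rcases eq_or_lt_of_le hn with h1 | h1
  · have : (n:ℝ) = 1 := by exact_mod_cast h1.symm
    simp [this]
  · have hn1 : (1:ℝ) < n := by exact_mod_cast h1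
    have hpq : (n:ℝ).HolderConjugate ((n:ℝ)/((n:ℝ)-1)) := (Real.holderConjugate_iff_eq_conjExponent hn1).2 rfl
    have h := ENNReal.lintegral_mul_le_Lp_mul_Lq μ hpq
      (f := fun a => g a ^ (1/(n:ℝ))) (g := fun _ => (1:ℝ≥0∞))
      (hg.pow_const _) aemeasurable_const
    simp only [mul_one, ENNReal.one_rpow, lintegral_const, one_mul] at h
    calc ∫⁻ a, g a ^ (1/(n:ℝ)) ∂μ
        ≤ (∫⁻ a, (g a ^ (1/(n:ℝ))) ^ (n:ℝ) ∂μ) ^ (1/(n:ℝ)) * (μ Set.univ * 1) ^ (1/((n:ℝ)/((n:ℝ)-1))) := by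
          simpa using h
      _ = (∫⁻ a, g a ∂μ) ^ (1/(n:ℝ)) * (μ Set.univ) ^ (1 - 1/(n:ℝ)) := by
          congr 2
          · refine lintegral_congr fun a => ?_
            rw [← ENNReal.rpow_mul, one_div, inv_mul_cancel₀ (by positivity : (n:ℝ) ≠ 0),
              ENNReal.rpow_one]
          · rw [mul_one]
          · rw [one_div, ← hpq.inv_add_inv_eq_one]
            field_simp
            ring

lemma sqrt_int (r : ℝ) (hr : 0 < r) :
    ∫⁻ s in Set.Ioo (0:ℝ) (2*r), ENNReal.ofReal (Real.sqrt (r/s)) ≤ ENNReal.ofReal (3*r) := by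
  have hcong : ∫⁻ s in Set.Ioo (0:ℝ) (2*r), ENNReal.ofReal (Real.sqrt (r/s))
      = ∫⁻ s in Set.Ioo (0:ℝ) (2*r), ENNReal.ofReal (Real.sqrt r * s ^ (-(1/2) : ℝ)) := by
    refine setLIntegral_congr_fun measurableSet_Ioo (fun s hs => ?_)
    congr 1
    rw [Real.sqrt_div hr.le, Real.sqrt_eq_rpow s, div_eq_mul_inv,
      ← Real.rpow_neg hs.1.le]
  rw [hcong]
  have hint : IntegrableOn (fun s : ℝ => Real.sqrt r * s ^ (-(1/2) : ℝ)) (Set.Ioo 0 (2*r)) := by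
    have h1 : IntervalIntegrable (fun s : ℝ => s ^ (-(1/2) : ℝ)) volume 0 (2*r) :=
      intervalIntegral.intervalIntegrable_rpow' (by norm_num)
    rw [intervalIntegrable_iff, Set.uIoc_of_le (by linarith)] at h1
    exact (h1.mono_set Set.Ioo_subset_Ioc_self).const_mul _
  rw [← ofReal_integral_eq_lintegral_ofReal hint]
  · apply ENNReal.ofReal_le_ofReal
    have hval : ∫ s in Set.Ioo (0:ℝ) (2*r), Real.sqrt r * s ^ (-(1/2) : ℝ)
        = Real.sqrt r * (((2*r) ^ ((1:ℝ)/2)) / (1/2)) := by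
      rw [integral_const_mul, ← integral_Ioc_eq_integral_Ioo,
        ← intervalIntegral.integral_of_le (by linarith : (0:ℝ) ≤ 2*r),
        integral_rpow (Or.inl (by norm_num))]
      norm_num
    rw [hval]
    rw [← Real.sqrt_eq_rpow (2*r)]
    have ha := Real.sq_sqrt hr.le
    have hb := Real.sq_sqrt (by linarith : (0:ℝ) ≤ 2*r)
    have ha' := Real.sqrt_nonneg r
    have hb' := Real.sqrt_nonneg (2*r)
    nlinarith [sq_nonneg (Real.sqrt r - Real.sqrt (2*r))]
  · refine (ae_restrict_iff' measurableSet_Ioo).2 (Filter.Eventually.of_forall fun s hs => ?_)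
    have := Real.rpow_nonneg hs.1.le (-(1/2) : ℝ)
    positivity

lemma slice_lem (n : ℕ) (hn : 1 ≤ n) (p : ℝ) (hp : 0 < p)
    (F : EuclideanSpace ℝ (Fin n) × ℝ → ℝ) (N : EuclideanSpace ℝ (Fin n) → ℝ)
    (hF : Measurable F) (hN : Measurable N)
    (hF0 : ∀ Y, 0 ≤ F Y) (hN0 : ∀ x, 0 ≤ N x)
    (hdom : ∀ (z : EuclideanSpace ℝ (Fin n)) (s : ℝ) (z' : EuclideanSpace ℝ (Fin n)),
        0 < s → dist z z' < s → F (z, s) ≤ N z')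
    (x : EuclideanSpace ℝ (Fin n)) (r : ℝ) (hr : 0 < r) (s : ℝ) (hs : 0 < s) :
    ∫⁻ z in Metric.ball x r, ENNReal.ofReal (F (z, s) ^ (p/(n:ℝ)))
      ≤ (∫⁻ z', ENNReal.ofReal (N z' ^ p)) ^ (1/(n:ℝ))
        * (ENNReal.ofReal (r^n) * volume (Metric.ball (0:EuclideanSpace ℝ (Fin n)) 1)) ^ (1 - 1/(n:ℝ))
        * ENNReal.ofReal (Real.sqrt (r/s)) := by
  haveI : Nonempty (Fin n) := Fin.pos_iff_nonempty.mp hn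
  set κ := volume (Metric.ball (0:EuclideanSpace ℝ (Fin n)) 1) with hκdef
  have hκ0 : κ ≠ 0 := (Metric.measure_ball_pos volume 0 one_pos).ne'
  have hκt : κ ≠ ⊤ := measure_ball_lt_top.ne
  have hball : ∀ (z : EuclideanSpace ℝ (Fin n)) (t : ℝ), 0 ≤ t → volume (Metric.ball z t) = ENNReal.ofReal (t^n) * κ := by
    intro z t ht
    rw [Measure.addHaar_ball volume z ht, finrank_euclideanSpace_fin (𝕜 := ℝ)]
  set Np : EuclideanSpace ℝ (Fin n) → ℝ≥0∞ := fun z' => ENNReal.ofReal (N z' ^ p) with hNp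
  set g : EuclideanSpace ℝ (Fin n) → ℝ≥0∞ := fun z => ENNReal.ofReal (F (z, s) ^ p) with hg
  have hFz : Measurable (fun z : EuclideanSpace ℝ (Fin n) => F (z, s)) :=
    hF.comp (measurable_id.prodMk measurable_const)
  have hgmeas : Measurable g := (hFz.pow_const p).ennreal_ofReal
  have hNpmeas : Measurable Np := (hN.pow_const p).ennreal_ofReal
  -- pointwise rewrite
  have hrw : ∀ z : EuclideanSpace ℝ (Fin n), ENNReal.ofReal (F (z, s) ^ (p/(n:ℝ))) = g z ^ (1/(n:ℝ)) := by
    intro z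
    have h1 : F (z, s) ^ (p/(n:ℝ)) = (F (z, s) ^ p) ^ ((1:ℝ)/(n:ℝ)) := by
      rw [← Real.rpow_mul (hF0 _)]
      congr 1
      field_simp
    rw [hg, h1, ENNReal.ofReal_rpow_of_nonneg (Real.rpow_nonneg (hF0 _) _)
      (by positivity : (0:ℝ) ≤ 1/(n:ℝ))]
  -- Claim 1: pointwise bound on g
  have hg_le : ∀ z : EuclideanSpace ℝ (Fin n), g z ≤ (∫⁻ z' in Metric.ball z s, Np z') * (ENNReal.ofReal (s^n) * κ)⁻¹ := by
    intro z
    have h1 : g z * (ENNReal.ofReal (s^n) * κ) ≤ ∫⁻ z' in Metric.ball z s, Np z' := by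
      rw [← hball z s hs.le, ← setLIntegral_const (Metric.ball z s) (g z)]
      refine setLIntegral_mono hNpmeas fun z' hz' => ?_
      apply ENNReal.ofReal_le_ofReal
      exact Real.rpow_le_rpow (hF0 _) (hdom z s z' hs (by rwa [dist_comm, ← Metric.mem_ball])) hp.le
    rw [← ENNReal.le_div_iff_mul_le (Or.inl (mul_ne_zero (ENNReal.ofReal_pos.mpr (by positivity)).ne' hκ0)) (Or.inl (ENNReal.mul_ne_top ENNReal.ofReal_ne_top hκt))] at h1
    rwa [ENNReal.div_eq_inv_mul, mul_comm] at h1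
  -- Fubini
  have hfub : ∫⁻ z in Metric.ball x r, (∫⁻ z' in Metric.ball z s, Np z')
      ≤ (∫⁻ z', Np z') * (ENNReal.ofReal ((min r s)^n) * κ) := by
    have hSmeas : MeasurableSet {q : EuclideanSpace ℝ (Fin n) × EuclideanSpace ℝ (Fin n) | dist q.1 q.2 < s} :=
      (isOpen_lt (continuous_fst.dist continuous_snd) continuous_const).measurableSet
    set f : EuclideanSpace ℝ (Fin n) × EuclideanSpace ℝ (Fin n) → ℝ≥0∞ :=
      fun q => Set.indicator {q : EuclideanSpace ℝ (Fin n) × EuclideanSpace ℝ (Fin n) | dist q.1 q.2 < s}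
        (fun q => Np q.2) q with hf
    have hfmeas : Measurable f := (hNpmeas.comp measurable_snd).indicator hSmeas
    have key : ∀ z : EuclideanSpace ℝ (Fin n), ∫⁻ z' in Metric.ball z s, Np z' = ∫⁻ z', f (z, z') := by
      intro z
      rw [← lintegral_indicator measurableSet_ball]
      refine lintegral_congr fun z' => ?_
      rw [hf]
      simp only [Set.indicator_apply, Set.mem_setOf_eq]
      by_cases hmem : z' ∈ Metric.ball z s
      · rw [Set.indicator_of_mem hmem, if_pos (by rw [dist_comm]; exact Metric.mem_ball.mp hmem)]
      · rw [Set.indicator_of_notMem hmem,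
          if_neg (fun h => hmem (Metric.mem_ball.mpr (by rwa [dist_comm] at h)))]
    have key2 : ∀ z' : EuclideanSpace ℝ (Fin n),
        (∫⁻ z in Metric.ball x r, f (z, z')) = Np z' * volume (Metric.ball z' s ∩ Metric.ball x r) := by
      intro z'
      have : (fun z : EuclideanSpace ℝ (Fin n) => f (z, z'))
          = Set.indicator (Metric.ball z' s) (fun _ => Np z') := by
        funext z
        rw [hf]
        simp only [Set.indicator_apply, Set.mem_setOf_eq]
        by_cases hmem : dist z z' < s
        · rw [if_pos hmem, Set.indicator_of_mem (Metric.mem_ball.mpr hmem)]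
        · rw [if_neg hmem, Set.indicator_of_notMem (fun h => hmem (Metric.mem_ball.mp h))]
      rw [this, lintegral_indicator measurableSet_ball, setLIntegral_const,
        Measure.restrict_apply measurableSet_ball]
    have hvol : ∀ z' : EuclideanSpace ℝ (Fin n),
        volume (Metric.ball z' s ∩ Metric.ball x r) ≤ ENNReal.ofReal ((min r s)^n) * κ := by
      intro z'
      rcases le_total r s with h | h
      · rw [min_eq_left h, ← hball x r hr.le]
        exact measure_mono Set.inter_subset_right
      · rw [min_eq_right h, ← hball z' s hs.le]
        exact measure_mono Set.inter_subset_left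
    calc ∫⁻ z in Metric.ball x r, (∫⁻ z' in Metric.ball z s, Np z')
        = ∫⁻ z in Metric.ball x r, ∫⁻ z', f (z, z') := lintegral_congr fun z => key z
      _ = ∫⁻ z', ∫⁻ z in Metric.ball x r, f (z, z') := lintegral_lintegral_swap hfmeas.aemeasurable
      _ = ∫⁻ z', Np z' * volume (Metric.ball z' s ∩ Metric.ball x r) := lintegral_congr fun z' => key2 z'
      _ ≤ ∫⁻ z', Np z' * (ENNReal.ofReal ((min r s)^n) * κ) :=
          lintegral_mono fun z' => mul_le_mul_right (hvol z') _
      _ = (∫⁻ z', Np z') * (ENNReal.ofReal ((min r s)^n) * κ) :=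
          lintegral_mul_const _ hNpmeas
  -- assemble
  set c : ℝ≥0∞ := ENNReal.ofReal (s^n) * κ with hc
  have hc0 : c ≠ 0 := mul_ne_zero (ENNReal.ofReal_pos.mpr (by positivity)).ne' hκ0
  have hct : c ≠ ⊤ := ENNReal.mul_ne_top ENNReal.ofReal_ne_top hκt
  set A : ℝ≥0∞ := ∫⁻ z', Np z' with hA
  have hIg : (∫⁻ z in Metric.ball x r, g z) ≤ A * ENNReal.ofReal (Real.sqrt (r/s) ^ n) := by
    have step1 : (∫⁻ z in Metric.ball x r, g z)
        ≤ (∫⁻ z in Metric.ball x r, (∫⁻ z' in Metric.ball z s, Np z')) * c⁻¹ := by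
      rw [← lintegral_mul_const' c⁻¹ _ (ENNReal.inv_ne_top.mpr hc0)]
      exact lintegral_mono fun z => hg_le z
    refine step1.trans ?_
    have step2 : (∫⁻ z in Metric.ball x r, (∫⁻ z' in Metric.ball z s, Np z')) * c⁻¹
        ≤ (A * (ENNReal.ofReal ((min r s)^n) * κ)) * c⁻¹ := mul_le_mul_left hfub _
    refine step2.trans ?_
    have hmix : (ENNReal.ofReal ((min r s)^n) * κ) * c⁻¹ = ENNReal.ofReal ((min r s / s)^n) := by
      rw [hc, ENNReal.mul_inv (Or.inl (ENNReal.ofReal_pos.mpr (by positivity)).ne')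
        (Or.inl ENNReal.ofReal_ne_top), mul_mul_mul_comm,
        ENNReal.mul_inv_cancel hκ0 hκt, mul_one, div_pow,
        ENNReal.ofReal_div_of_pos (by positivity), div_eq_mul_inv]
    rw [mul_assoc, hmix]
    refine mul_le_mul_right (ENNReal.ofReal_le_ofReal ?_) _
    have hms : min r s / s ≤ Real.sqrt (r/s) := by
      rcases le_total r s with h | h
      · rw [min_eq_left h]
        set t := Real.sqrt (r/s) with htdef
        have ht0 : 0 ≤ t := Real.sqrt_nonneg _
        have ht2 : t^2 = r/s := Real.sq_sqrt (by positivity)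
        have hle1 : r/s ≤ 1 := by
          rw [div_le_one hs]; exact h
        have ht1 : t ≤ 1 := by nlinarith
        nlinarith
      · rw [min_eq_right h, div_self hs.ne']
        rw [show (1:ℝ) = Real.sqrt 1 from Real.sqrt_one.symm]
        apply Real.sqrt_le_sqrt
        rw [le_div_iff₀ hs]
        simpa using h
    exact pow_le_pow_left₀ (by positivity) hms n
  -- Hölder
  calc ∫⁻ z in Metric.ball x r, ENNReal.ofReal (F (z, s) ^ (p/(n:ℝ)))
      = ∫⁻ z in Metric.ball x r, g z ^ (1/(n:ℝ)) := lintegral_congr fun z => hrw z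
    _ ≤ (∫⁻ z in Metric.ball x r, g z) ^ (1/(n:ℝ))
        * ((volume.restrict (Metric.ball x r)) Set.univ) ^ (1 - 1/(n:ℝ)) :=
        hoelder_rpow _ _ hgmeas.aemeasurable n hn
    _ = (∫⁻ z in Metric.ball x r, g z) ^ (1/(n:ℝ))
        * (ENNReal.ofReal (r^n) * κ) ^ (1 - 1/(n:ℝ)) := by
        rw [Measure.restrict_apply_univ, hball x r hr.le]
    _ ≤ (A * ENNReal.ofReal (Real.sqrt (r/s) ^ n)) ^ (1/(n:ℝ))
        * (ENNReal.ofReal (r^n) * κ) ^ (1 - 1/(n:ℝ)) :=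
        mul_le_mul_left (ENNReal.rpow_le_rpow hIg (by positivity)) _
    _ = A ^ (1/(n:ℝ)) * (ENNReal.ofReal (r^n) * κ) ^ (1 - 1/(n:ℝ))
        * ENNReal.ofReal (Real.sqrt (r/s)) := by
        rw [ENNReal.mul_rpow_of_nonneg _ _ (by positivity : (0:ℝ) ≤ 1/(n:ℝ))]
        have : (ENNReal.ofReal (Real.sqrt (r/s) ^ n)) ^ ((1:ℝ)/(n:ℝ))
            = ENNReal.ofReal (Real.sqrt (r/s)) := by
          rw [ENNReal.ofReal_pow (Real.sqrt_nonneg _), ← ENNReal.rpow_natCast, ← ENNReal.rpow_mul,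
            mul_one_div, div_self (by positivity : (n:ℝ) ≠ 0), ENNReal.rpow_one]
        rw [this]
        ring

lemma core_lem (n : ℕ) (hn : 1 ≤ n) (p : ℝ) (hp : 0 < p)
    (F : EuclideanSpace ℝ (Fin n) × ℝ → ℝ) (N : EuclideanSpace ℝ (Fin n) → ℝ)
    (hF : Measurable F) (hN : Measurable N)
    (hF0 : ∀ Y, 0 ≤ F Y) (hN0 : ∀ x, 0 ≤ N x)
    (hAne : (∫⁻ z', ENNReal.ofReal (N z' ^ p)) ≠ ⊤)
    (hdom : ∀ (z : EuclideanSpace ℝ (Fin n)) (s : ℝ) (z' : EuclideanSpace ℝ (Fin n)),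
        0 < s → dist z z' < s → F (z, s) ≤ N z')
    (x : EuclideanSpace ℝ (Fin n)) (r : ℝ) (hr : 0 < r) :
    ∫⁻ z in Metric.ball x r, ∫⁻ s in Set.Ioo (0:ℝ) (2*r), ENNReal.ofReal (F (z, s) ^ (p/(n:ℝ)))
      ≤ (∫⁻ z', ENNReal.ofReal (N z' ^ p)) ^ (1/(n:ℝ))
        * (ENNReal.ofReal (r^n) * volume (Metric.ball (0:EuclideanSpace ℝ (Fin n)) 1)) ^ (1 - 1/(n:ℝ))
        * ENNReal.ofReal (3*r) := by
  have hn1 : (1:ℝ) ≤ (n:ℝ) := by exact_mod_cast hn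
  set A : ℝ≥0∞ := ∫⁻ z', ENNReal.ofReal (N z' ^ p) with hA
  set B : ℝ≥0∞ := (ENNReal.ofReal (r^n)
    * volume (Metric.ball (0:EuclideanSpace ℝ (Fin n)) 1)) ^ (1 - 1/(n:ℝ)) with hB
  have hmeas : Measurable (fun q : EuclideanSpace ℝ (Fin n) × ℝ =>
      ENNReal.ofReal (F q ^ (p/(n:ℝ)))) := (hF.pow_const _).ennreal_ofReal
  have hswap : ∫⁻ z in Metric.ball x r, ∫⁻ s in Set.Ioo (0:ℝ) (2*r),
        ENNReal.ofReal (F (z, s) ^ (p/(n:ℝ)))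
      = ∫⁻ s in Set.Ioo (0:ℝ) (2*r), ∫⁻ z in Metric.ball x r,
        ENNReal.ofReal (F (z, s) ^ (p/(n:ℝ))) :=
    lintegral_lintegral_swap hmeas.aemeasurable
  rw [hswap]
  have hcne : A ^ (1/(n:ℝ)) * B ≠ ⊤ := by
    apply ENNReal.mul_ne_top
    · exact ENNReal.rpow_ne_top_of_nonneg (by positivity) hAne
    · exact ENNReal.rpow_ne_top_of_nonneg (by nlinarith [(by apply div_le_one_of_le₀ <;> linarith : 1/(n:ℝ) ≤ 1)] : (0:ℝ) ≤ 1 - 1/(n:ℝ))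
        (ENNReal.mul_ne_top ENNReal.ofReal_ne_top measure_ball_lt_top.ne)
  calc ∫⁻ s in Set.Ioo (0:ℝ) (2*r), ∫⁻ z in Metric.ball x r,
        ENNReal.ofReal (F (z, s) ^ (p/(n:ℝ)))
      ≤ ∫⁻ s in Set.Ioo (0:ℝ) (2*r), A ^ (1/(n:ℝ)) * B * ENNReal.ofReal (Real.sqrt (r/s)) := by
        refine setLIntegral_mono' measurableSet_Ioo fun s hs => ?_
        exact slice_lem n hn p hp F N hF hN hF0 hN0 hdom x r hr s hs.1
    _ = A ^ (1/(n:ℝ)) * B * ∫⁻ s in Set.Ioo (0:ℝ) (2*r), ENNReal.ofReal (Real.sqrt (r/s)) :=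
        lintegral_const_mul' _ _ hcne
    _ ≤ A ^ (1/(n:ℝ)) * B * ENNReal.ofReal (3*r) := mul_le_mul_right (sqrt_int r hr) _

lemma ofReal_int_le {α : Type*} [MeasurableSpace α] (μ : Measure α) (f : α → ℝ)
    (hf : ∀ a, 0 ≤ f a) :
    ENNReal.ofReal (∫ a, f a ∂μ) ≤ ∫⁻ a, ENNReal.ofReal (f a) ∂μ := by
  by_cases hint : Integrable f μ
  · rw [ofReal_integral_eq_lintegral_ofReal hint (Filter.Eventually.of_forall hf)]
  · rw [integral_undef hint]
    simp

lemma int_le_toReal {α : Type*} [MeasurableSpace α] (μ : Measure α) (f : α → ℝ)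
    (hf : ∀ a, 0 ≤ f a) :
    ∫ a, f a ∂μ ≤ (∫⁻ a, ENNReal.ofReal (f a) ∂μ).toReal := by
  by_cases hint : Integrable f μ
  · rw [← ofReal_integral_eq_lintegral_ofReal hint (Filter.Eventually.of_forall hf),
      ENNReal.toReal_ofReal (integral_nonneg hf)]
  · rw [integral_undef hint]
    exact ENNReal.toReal_nonneg

/-- If `N ∈ L^p(ℝ^n)` dominates `F` non-tangentially, then
`dμ(z,s) = F(z,s)^{p/n} dz ds` is a Carleson measure on `ℝ^{n+1}_+` with
`‖μ‖_𝒞 ≤ C ‖N‖_{L^p}^{p/n}`. -/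
theorem stmt_8 (n : ℕ) (hn : 1 ≤ n) (p : ℝ) (hp : 0 < p) :
    ∃ C : ℝ, 0 < C ∧
    ∀ (F : EuclideanSpace ℝ (Fin n) × ℝ → ℝ) (N : EuclideanSpace ℝ (Fin n) → ℝ),
      Measurable F → Measurable N →
      (∀ Y, 0 ≤ F Y) → (∀ x, 0 ≤ N x) →
      Integrable (fun x => N x ^ p) volume →
      (∀ (z : EuclideanSpace ℝ (Fin n)) (s : ℝ) (z' : EuclideanSpace ℝ (Fin n)),
        0 < s → dist z z' < s → F (z, s) ≤ N z') →
      ∀ (x : EuclideanSpace ℝ (Fin n)) (r : ℝ), 0 < r →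
        (1/r^n) * ∫ z in Metric.ball x r, (∫ s in Set.Ioo (0:ℝ) (2*r), F (z, s) ^ (p/(n:ℝ)))
          ≤ C * (∫ z, N z ^ p) ^ (1/(n:ℝ)) := by
  haveI : Nonempty (Fin n) := Fin.pos_iff_nonempty.mp hn
  have hn1 : (1:ℝ) ≤ (n:ℝ) := by exact_mod_cast hn
  set κ : ℝ≥0∞ := volume (Metric.ball (0:EuclideanSpace ℝ (Fin n)) 1) with hκdef
  have hκ0 : κ ≠ 0 := (Metric.measure_ball_pos volume 0 one_pos).ne'
  have hκt : κ ≠ ⊤ := measure_ball_lt_top.ne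
  have hκ' : 0 < κ.toReal := ENNReal.toReal_pos hκ0 hκt
  have hexp : (0:ℝ) ≤ 1 - 1/(n:ℝ) := by
    nlinarith [(by apply div_le_one_of_le₀ <;> linarith : 1/(n:ℝ) ≤ 1)]
  refine ⟨3 * κ.toReal ^ (1 - 1/(n:ℝ)), by positivity, ?_⟩
  intro F N hF hN hF0 hN0 hNint hdom x r hr
  set A : ℝ := ∫ z, N z ^ p with hAdef
  have hA0 : 0 ≤ A := integral_nonneg fun z => Real.rpow_nonneg (hN0 z) p
  have hAeq : (∫⁻ z', ENNReal.ofReal (N z' ^ p)) = ENNReal.ofReal A :=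
    (ofReal_integral_eq_lintegral_ofReal hNint
      (Filter.Eventually.of_forall fun z => Real.rpow_nonneg (hN0 z) p)).symm
  have hAne : (∫⁻ z', ENNReal.ofReal (N z' ^ p)) ≠ ⊤ := by
    rw [hAeq]; exact ENNReal.ofReal_ne_top
  set Bd : ℝ≥0∞ := ENNReal.ofReal A ^ (1/(n:ℝ))
    * (ENNReal.ofReal (r^n) * κ) ^ (1 - 1/(n:ℝ)) * ENNReal.ofReal (3*r) with hBd
  have hBdne : Bd ≠ ⊤ := by
    apply ENNReal.mul_ne_top
    apply ENNReal.mul_ne_top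
    · exact ENNReal.rpow_ne_top_of_nonneg (by positivity) ENNReal.ofReal_ne_top
    · exact ENNReal.rpow_ne_top_of_nonneg hexp
        (ENNReal.mul_ne_top ENNReal.ofReal_ne_top hκt)
    · exact ENNReal.ofReal_ne_top
  have hcore := core_lem n hn p hp F N hF hN hF0 hN0 hAne hdom x r hr
  rw [hAeq] at hcore
  -- pass to real integrals
  have step1 : (∫ z in Metric.ball x r, (∫ s in Set.Ioo (0:ℝ) (2*r), F (z, s) ^ (p/(n:ℝ))))
      ≤ Bd.toReal := by
    have h1 : (∫ z in Metric.ball x r, (∫ s in Set.Ioo (0:ℝ) (2*r), F (z, s) ^ (p/(n:ℝ))))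
        ≤ (∫⁻ z in Metric.ball x r,
            ENNReal.ofReal (∫ s in Set.Ioo (0:ℝ) (2*r), F (z, s) ^ (p/(n:ℝ)))).toReal :=
      int_le_toReal _ _ fun z => integral_nonneg fun s => Real.rpow_nonneg (hF0 _) _
    refine h1.trans (ENNReal.toReal_mono hBdne ?_)
    refine le_trans (lintegral_mono fun z => ?_) hcore
    exact ofReal_int_le _ _ fun s => Real.rpow_nonneg (hF0 _) _
  have hBdtoReal : Bd.toReal
      = A ^ (1/(n:ℝ)) * (r^n * κ.toReal) ^ (1 - 1/(n:ℝ)) * (3*r) := by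
    rw [hBd, ENNReal.toReal_mul, ENNReal.toReal_mul, ← ENNReal.toReal_rpow,
      ← ENNReal.toReal_rpow, ENNReal.toReal_ofReal hA0, ENNReal.toReal_mul,
      ENNReal.toReal_ofReal (by positivity : (0:ℝ) ≤ r^n),
      ENNReal.toReal_ofReal (by positivity : (0:ℝ) ≤ 3*r)]
  have hr1 : (r^n * κ.toReal) ^ (1 - 1/(n:ℝ)) = r ^ ((n:ℝ)-1) * κ.toReal ^ (1 - 1/(n:ℝ)) := by
    rw [Real.mul_rpow (by positivity) ENNReal.toReal_nonneg, ← Real.rpow_natCast r n,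
      ← Real.rpow_mul hr.le]
    congr 2
    field_simp
  have hr2 : r ^ ((n:ℝ)-1) * r = r ^ n := by
    calc r ^ ((n:ℝ)-1) * r = r ^ ((n:ℝ)-1) * r ^ (1:ℝ) := by rw [Real.rpow_one]
      _ = r ^ ((n:ℝ)-1+1) := (Real.rpow_add hr _ _).symm
      _ = r ^ ((n:ℝ)) := by norm_num
      _ = r ^ n := Real.rpow_natCast r n
  have hrn : (0:ℝ) < r^n := by positivity
  calc (1/r^n) * ∫ z in Metric.ball x r, (∫ s in Set.Ioo (0:ℝ) (2*r), F (z, s) ^ (p/(n:ℝ)))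
      ≤ (1/r^n) * Bd.toReal := by
        apply mul_le_mul_of_nonneg_left step1 (by positivity)
    _ = 3 * κ.toReal ^ (1 - 1/(n:ℝ)) * A ^ (1/(n:ℝ)) := by
        rw [hBdtoReal, hr1]
        have hre : A ^ (1/(n:ℝ)) * (r ^ ((n:ℝ)-1) * κ.toReal ^ (1 - 1/(n:ℝ))) * (3*r)
            = 3 * κ.toReal ^ (1 - 1/(n:ℝ)) * A ^ (1/(n:ℝ)) * (r ^ ((n:ℝ)-1) * r) := by ring
        rw [hre, hr2]
        field_simp
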